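/- Let G be the free metabelian group of rank n ≥ 2 and let g ∈ G' with g ≠ 1. Then the centralizer of g in G is exactly the commutator subgroup G'. -/

import Mathlib

namespace Stmt9
noncomputable section

abbrev AA (n : ℕ) := Multiplicative (Fin n →₀ ℤ)
abbrev ZF (n : ℕ) := MonoidAlgebra ℤ (FreeGroup (Fin n))
abbrev RA (n : ℕ) := MonoidAlgebra ℤ (AA n)

def abar (n : ℕ) : FreeGroup (Fin n) →* AA n :=
  FreeGroup.lift fun i => Multiplicative.ofAdd (Finsupp.single i 1)

def addAutToMulAut (V : Type*) [AddCommGroup V] :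
    Multiplicative (AddAut V) →* MulAut (Multiplicative V) where
  toFun e := AddEquiv.toMultiplicative (Multiplicative.toAdd e)
  map_one' := by ext x; rfl
  map_mul' e f := by ext x; rfl

def magnusAut (n : ℕ) (G : Type) [Group G] :
    G →* MulAut (Multiplicative (Fin n → MonoidAlgebra ℤ G)) :=
  (addAutToMulAut _).comp
    ((DistribMulAction.toAddAut (MonoidAlgebra ℤ G)ˣ (Fin n → MonoidAlgebra ℤ G)).comp
      (MonoidAlgebra.of ℤ G).toHomUnits)

lemma magnusAut_apply (n : ℕ) (G : Type) [Group G] (g : G)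
    (v : Multiplicative (Fin n → MonoidAlgebra ℤ G)) (i : Fin n) :
    Multiplicative.toAdd (magnusAut n G g v) i
      = MonoidAlgebra.of ℤ G g * (Multiplicative.toAdd v) i := rfl

abbrev MF (n : ℕ) := Multiplicative (Fin n → ZF n) ⋊[magnusAut n (FreeGroup (Fin n))] FreeGroup (Fin n)
abbrev MA (n : ℕ) := Multiplicative (Fin n → RA n) ⋊[magnusAut n (AA n)] AA n

def phi0 (n : ℕ) : FreeGroup (Fin n) →* MF n :=
  FreeGroup.lift fun i => ⟨Multiplicative.ofAdd (Pi.single i 1), FreeGroup.of i⟩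

def alphaMap (n : ℕ) : ZF n →+* RA n := MonoidAlgebra.mapDomainRingHom ℤ (abar n)

lemma alphaMap_of (n : ℕ) (w : FreeGroup (Fin n)) :
    alphaMap n (MonoidAlgebra.of ℤ _ w) = MonoidAlgebra.of ℤ (AA n) (abar n w) := by
  simp [alphaMap, MonoidAlgebra.of_apply, MonoidAlgebra.mapDomainRingHom,
    Finsupp.mapDomain_single]

def alphaV (n : ℕ) : Multiplicative (Fin n → ZF n) →* Multiplicative (Fin n → RA n) :=
  AddMonoidHom.toMultiplicative
    (AddMonoidHom.mk' (fun v i => alphaMap n (v i)) (by intro a b; funext i; simp))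

def theta (n : ℕ) : MF n →* MA n :=
  SemidirectProduct.map (alphaV n) (abar n) (by
    intro g
    refine MonoidHom.ext fun v => ?_
    refine Multiplicative.toAdd.injective (funext fun i => ?_)
    show alphaMap n (MonoidAlgebra.of ℤ _ g * Multiplicative.toAdd v i)
        = MonoidAlgebra.of ℤ (AA n) (abar n g) * alphaMap n (Multiplicative.toAdd v i)
    rw [map_mul, alphaMap_of])

def psi (n : ℕ) : FreeGroup (Fin n) →* MA n := (theta n).comp (phi0 n)

lemma rightHom_phi0 (n : ℕ) : (SemidirectProduct.rightHom).comp (phi0 n) = MonoidHom.id _ := by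
  apply FreeGroup.ext_hom
  intro i
  simp only [MonoidHom.comp_apply, phi0, FreeGroup.lift_apply_of, MonoidHom.id_apply]
  rfl

lemma rightHom_psi (n : ℕ) : (SemidirectProduct.rightHom).comp (psi n) = abar n := by
  apply FreeGroup.ext_hom
  intro i
  simp only [MonoidHom.comp_apply, psi, theta, phi0, FreeGroup.lift_apply_of]
  rfl


lemma phi0_right (n : ℕ) (w : FreeGroup (Fin n)) : (phi0 n w).right = w :=
  DFunLike.congr_fun (rightHom_phi0 n) w

/-- The (abelianized-target-free) Fox derivative vector. -/
def D (n : ℕ) (w : FreeGroup (Fin n)) : Fin n → ZF n :=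
  Multiplicative.toAdd ((phi0 n w).left)

lemma D_one (n : ℕ) : D n 1 = 0 := by
  show Multiplicative.toAdd ((phi0 n 1).left) = 0
  rw [map_one]
  rfl

lemma D_of (n : ℕ) (i : Fin n) : D n (FreeGroup.of i) = Pi.single i 1 := by
  simp only [D, phi0, FreeGroup.lift_apply_of]
  rfl

lemma D_mul (n : ℕ) (u v : FreeGroup (Fin n)) (i : Fin n) :
    D n (u * v) i = D n u i + MonoidAlgebra.of ℤ _ u * D n v i := by
  show Multiplicative.toAdd ((phi0 n (u * v)).left) i = _
  rw [map_mul, SemidirectProduct.mul_left, phi0_right]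
  rfl

lemma D_inv (n : ℕ) (u : FreeGroup (Fin n)) (i : Fin n) :
    D n u⁻¹ i = -(MonoidAlgebra.of ℤ _ u⁻¹ * D n u i) := by
  have h0 : D n (u * u⁻¹) i = 0 := by rw [mul_inv_cancel, D_one]; rfl
  rw [D_mul] at h0
  have h1 : MonoidAlgebra.of ℤ (FreeGroup (Fin n)) u⁻¹ * MonoidAlgebra.of ℤ _ u = 1 := by
    rw [← map_mul, inv_mul_cancel, map_one]
  calc D n u⁻¹ i = (MonoidAlgebra.of ℤ _ u⁻¹ * MonoidAlgebra.of ℤ _ u) * D n u⁻¹ i := by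
        rw [h1, one_mul]
    _ = MonoidAlgebra.of ℤ _ u⁻¹ * (MonoidAlgebra.of ℤ _ u * D n u⁻¹ i) := by rw [mul_assoc]
    _ = MonoidAlgebra.of ℤ _ u⁻¹ * (-(D n u i)) := by
        rw [eq_neg_of_add_eq_zero_right h0]
    _ = -(MonoidAlgebra.of ℤ _ u⁻¹ * D n u i) := by rw [mul_neg]

lemma fox (n : ℕ) (w : FreeGroup (Fin n)) :
    ∑ i : Fin n, D n w i * (MonoidAlgebra.of ℤ _ (FreeGroup.of i) - 1)
      = MonoidAlgebra.of ℤ (FreeGroup (Fin n)) w - 1 := by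
  have hinv : ∀ u : FreeGroup (Fin n),
      (∑ i : Fin n, D n u i * (MonoidAlgebra.of ℤ _ (FreeGroup.of i) - 1)
        = MonoidAlgebra.of ℤ (FreeGroup (Fin n)) u - 1) →
      ∑ i : Fin n, D n u⁻¹ i * (MonoidAlgebra.of ℤ _ (FreeGroup.of i) - 1)
        = MonoidAlgebra.of ℤ (FreeGroup (Fin n)) u⁻¹ - 1 := by
    intro u ih
    have h1 : MonoidAlgebra.of ℤ (FreeGroup (Fin n)) u⁻¹ * MonoidAlgebra.of ℤ _ u = 1 := by
      rw [← map_mul, inv_mul_cancel, map_one]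
    calc ∑ i : Fin n, D n u⁻¹ i * (MonoidAlgebra.of ℤ _ (FreeGroup.of i) - 1)
        = ∑ i : Fin n, -(MonoidAlgebra.of ℤ _ u⁻¹
            * (D n u i * (MonoidAlgebra.of ℤ _ (FreeGroup.of i) - 1))) := by
          refine Finset.sum_congr rfl fun i _ => ?_
          rw [D_inv, neg_mul, mul_assoc]
      _ = -(MonoidAlgebra.of ℤ _ u⁻¹ * (MonoidAlgebra.of ℤ _ u - 1)) := by
          rw [Finset.sum_neg_distrib, ← Finset.mul_sum, ih]
      _ = MonoidAlgebra.of ℤ _ u⁻¹ - 1 := by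
          rw [mul_sub, mul_one, h1, neg_sub]
  induction w using FreeGroup.induction_on with
  | C1 => simp [D_one, MonoidAlgebra.one_def]
  | of i =>
      show ∑ j : Fin n, D n (FreeGroup.of i) j * (MonoidAlgebra.of ℤ _ (FreeGroup.of j) - 1)
          = MonoidAlgebra.of ℤ (FreeGroup (Fin n)) (FreeGroup.of i) - 1
      simp [D_of, Pi.single_apply, ite_mul, Finset.sum_ite_eq']
  | inv_of i ih => exact hinv _ ih
  | mul u v ihu ihv =>
      have hD : ∀ j, D n (u * v) j = D n u j + MonoidAlgebra.of ℤ _ u * D n v j := D_mul n u v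
      calc ∑ j, D n (u*v) j * (MonoidAlgebra.of ℤ _ (FreeGroup.of j) - 1)
          = ∑ j, (D n u j * (MonoidAlgebra.of ℤ _ (FreeGroup.of j) - 1)
              + MonoidAlgebra.of ℤ _ u * (D n v j * (MonoidAlgebra.of ℤ _ (FreeGroup.of j) - 1))) := by
            refine Finset.sum_congr rfl fun j _ => ?_
            rw [hD j, add_mul, mul_assoc]
        _ = (MonoidAlgebra.of ℤ _ u - 1) + MonoidAlgebra.of ℤ _ u * (MonoidAlgebra.of ℤ _ v - 1) := by
            rw [Finset.sum_add_distrib, ihu, ← Finset.mul_sum, ihv]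
        _ = MonoidAlgebra.of ℤ _ (u * v) - 1 := by
            rw [mul_sub, mul_one, ← map_mul]
            abel


/-! ### A set-theoretic section of `abar` -/

def sec (n : ℕ) (a : AA n) : FreeGroup (Fin n) :=
  ((List.finRange n).map fun i => FreeGroup.of i ^ (Multiplicative.toAdd a i)).prod

lemma abar_sec (n : ℕ) (a : AA n) : abar n (sec n a) = a := by
  have h : ∀ i : Fin n, abar n (FreeGroup.of i ^ (Multiplicative.toAdd a i))
      = Multiplicative.ofAdd (Finsupp.single i (Multiplicative.toAdd a i)) := by
    intro i
    rw [map_zpow, abar, FreeGroup.lift_apply_of, ← ofAdd_zsmul, Finsupp.smul_single,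
      smul_eq_mul, mul_one]
  rw [sec, map_list_prod]
  have h2 : ((List.finRange n).map fun i =>
        abar n (FreeGroup.of i ^ (Multiplicative.toAdd a i))).prod
      = ∏ i : Fin n, Multiplicative.ofAdd (Finsupp.single i (Multiplicative.toAdd a i)) := by
    rw [Fin.prod_univ_def]
    congr 1
    exact List.map_congr_left fun i _ => h i
  rw [List.map_map]
  have h3 : (abar n) ∘ (fun i => FreeGroup.of i ^ (Multiplicative.toAdd a i))
      = fun i => abar n (FreeGroup.of i ^ (Multiplicative.toAdd a i)) := rfl
  rw [h3, h2, ← ofAdd_sum]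
  have h4 : ∑ i : Fin n, Finsupp.single i (Multiplicative.toAdd a i)
      = Multiplicative.toAdd a := by
    ext j
    rw [Finsupp.finset_sum_apply]
    simp [Finsupp.single_apply]
  rw [h4]
  rfl

lemma sec_one (n : ℕ) : sec n 1 = 1 := by
  have : ∀ i : Fin n, FreeGroup.of i ^ (Multiplicative.toAdd (1 : AA n) i) = 1 := by
    intro i; simp
  simp [sec, List.map_congr_left fun i _ => this i]

/-! ### The kernel of `alphaMap` -/

/-- The span of `(u - 1) * g` for `u ∈ ker abar`. -/
def WK (n : ℕ) : Submodule ℤ (ZF n) :=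
  Submodule.span ℤ {y | ∃ u ∈ (abar n).ker, ∃ g : FreeGroup (Fin n),
    y = (MonoidAlgebra.of ℤ _ u - 1) * MonoidAlgebra.of ℤ _ g}

lemma sub_sec_mem_WK (n : ℕ) (g : FreeGroup (Fin n)) :
    MonoidAlgebra.of ℤ _ g - MonoidAlgebra.of ℤ _ (sec n (abar n g)) ∈ WK n := by
  set t := sec n (abar n g) with ht
  have hu : g * t⁻¹ ∈ (abar n).ker := by
    rw [MonoidHom.mem_ker, map_mul, map_inv, ht, abar_sec, mul_inv_cancel]
  have key : (MonoidAlgebra.of ℤ (FreeGroup (Fin n)) (g * t⁻¹) - 1) * MonoidAlgebra.of ℤ _ t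
      = MonoidAlgebra.of ℤ _ g - MonoidAlgebra.of ℤ _ t := by
    rw [sub_mul, one_mul, ← map_mul, inv_mul_cancel_right]
  rw [← key]
  exact Submodule.subset_span ⟨g * t⁻¹, hu, t, rfl⟩

def LL (n : ℕ) : (FreeGroup (Fin n) →₀ ℤ) →ₗ[ℤ] ZF n :=
  Finsupp.lift (ZF n) ℤ (FreeGroup (Fin n))
    (fun g => MonoidAlgebra.of ℤ _ (sec n (abar n g)))

def gammaL (n : ℕ) : (AA n →₀ ℤ) →ₗ[ℤ] ZF n :=
  Finsupp.lift (ZF n) ℤ (AA n) (fun a => MonoidAlgebra.of ℤ _ (sec n a))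

lemma single_eq_smul_of (n : ℕ) (g : FreeGroup (Fin n)) (c : ℤ) :
    (MonoidAlgebra.single g c : ZF n) = c • MonoidAlgebra.of ℤ _ g := by
  rw [MonoidAlgebra.of_apply, MonoidAlgebra.smul_single, smul_eq_mul, mul_one]

lemma LL_single (n : ℕ) (g : FreeGroup (Fin n)) (c : ℤ) :
    LL n (Finsupp.single g c) = c • MonoidAlgebra.of ℤ _ (sec n (abar n g)) := by
  rw [LL, Finsupp.lift_apply, Finsupp.sum_single_index]
  simp

lemma gammaL_single (n : ℕ) (a : AA n) (c : ℤ) :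
    gammaL n (Finsupp.single a c) = c • MonoidAlgebra.of ℤ _ (sec n a) := by
  rw [gammaL, Finsupp.lift_apply, Finsupp.sum_single_index]
  simp

lemma alphaMap_single (n : ℕ) (g : FreeGroup (Fin n)) (c : ℤ) :
    alphaMap n (MonoidAlgebra.single g c) = MonoidAlgebra.single (abar n g) c := by
  have h1 : (MonoidAlgebra.single g c : ZF n) = c • MonoidAlgebra.of ℤ _ g :=
    single_eq_smul_of n g c
  have h2 : (MonoidAlgebra.single (abar n g) c : RA n) = c • MonoidAlgebra.of ℤ _ (abar n g) := by
    rw [MonoidAlgebra.of_apply, MonoidAlgebra.smul_single, smul_eq_mul, mul_one]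
  rw [h1, h2, map_zsmul, alphaMap_of]

lemma mem_WK_of_alphaMap_eq_zero (n : ℕ) (x : ZF n) (hx : alphaMap n x = 0) :
    x ∈ WK n := by
  have key : ∀ y : FreeGroup (Fin n) →₀ ℤ, MonoidAlgebra.ofCoeff (R := ℤ) y - LL n y ∈ WK n := by
    intro y
    induction y using Finsupp.induction_linear with
    | zero => simpa using (WK n).zero_mem
    | add a b ha hb =>
        have := (WK n).add_mem ha hb
        rw [sub_add_sub_comm] at this
        rw [map_add]
        exact this
    | single g c =>
        show (MonoidAlgebra.single g c : ZF n) - _ ∈ WK n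
        rw [LL_single, single_eq_smul_of]
        rw [← smul_sub]
        exact (WK n).smul_mem c (sub_sec_mem_WK n g)
  have hLgamma : ∀ y : FreeGroup (Fin n) →₀ ℤ, LL n y = gammaL n (alphaMap n (MonoidAlgebra.ofCoeff y)).coeff := by
    intro y
    induction y using Finsupp.induction_linear with
    | zero => simp
    | add a b ha hb => rw [map_add, MonoidAlgebra.ofCoeff_add, map_add, MonoidAlgebra.coeff_add, map_add, ha, hb]
    | single g c => rw [LL_single, show MonoidAlgebra.ofCoeff (Finsupp.single g c) = (MonoidAlgebra.single g c : ZF n) from rfl, alphaMap_single, MonoidAlgebra.coeff_single, gammaL_single]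
  have hmap : LL n x.coeff = 0 := by
    rw [hLgamma x.coeff, MonoidAlgebra.ofCoeff_coeff, hx, MonoidAlgebra.coeff_zero, map_zero]
  have := key x.coeff
  rwa [hmap, sub_zero, MonoidAlgebra.ofCoeff_coeff] at this

/-! ### The map `μ` detecting the relation-module class -/

abbrev NN (n : ℕ) : Subgroup (FreeGroup (Fin n)) := (abar n).ker
abbrev CC (n : ℕ) := Additive (Abelianization ↥(NN n))

lemma uof_mem (n : ℕ) (g : FreeGroup (Fin n)) : g * (sec n (abar n g))⁻¹ ∈ NN n := by
  rw [MonoidHom.mem_ker, map_mul, map_inv, abar_sec, mul_inv_cancel]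

def muF (n : ℕ) (g : FreeGroup (Fin n)) : CC n :=
  Additive.ofMul (Abelianization.of (⟨g * (sec n (abar n g))⁻¹, uof_mem n g⟩ : ↥(NN n)))

def muPre (n : ℕ) : (FreeGroup (Fin n) →₀ ℤ) →ₗ[ℤ] CC n :=
  Finsupp.lift (CC n) ℤ (FreeGroup (Fin n)) (muF n)

def mu (n : ℕ) : ZF n →ₗ[ℤ] CC n where
  toFun x := muPre n x.coeff
  map_add' a b := map_add (muPre n) a.coeff b.coeff
  map_smul' c a := map_smul (muPre n) c a.coeff

lemma mu_single (n : ℕ) (g : FreeGroup (Fin n)) (c : ℤ) :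
    mu n (MonoidAlgebra.single g c) = c • muF n g := by
  show muPre n (Finsupp.single g c) = c • muF n g
  rw [muPre, Finsupp.lift_apply, Finsupp.sum_single_index]
  simp

lemma mu_of (n : ℕ) (g : FreeGroup (Fin n)) :
    mu n (MonoidAlgebra.of ℤ _ g) = muF n g := by
  rw [MonoidAlgebra.of_apply]
  exact (mu_single n g 1).trans (one_smul _ _)

lemma muF_mul_left (n : ℕ) (u : FreeGroup (Fin n)) (hu : u ∈ NN n) (h : FreeGroup (Fin n)) :
    muF n (u * h) = Additive.ofMul (Abelianization.of (⟨u, hu⟩ : ↥(NN n))) + muF n h := by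
  have habar : abar n (u * h) = abar n h := by
    rw [map_mul, MonoidHom.mem_ker.mp hu, one_mul]
  have hsub : (⟨u * h * (sec n (abar n (u * h)))⁻¹, uof_mem n (u * h)⟩ : ↥(NN n))
      = (⟨u, hu⟩ : ↥(NN n)) * ⟨h * (sec n (abar n h))⁻¹, uof_mem n h⟩ := by
    apply Subtype.ext
    show u * h * (sec n (abar n (u * h)))⁻¹ = u * (h * (sec n (abar n h))⁻¹)
    rw [habar, mul_assoc]
  rw [muF, hsub, map_mul]
  rfl

lemma muF_of_mem (n : ℕ) (w : FreeGroup (Fin n)) (hw : w ∈ NN n) :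
    muF n w = Additive.ofMul (Abelianization.of (⟨w, hw⟩ : ↥(NN n))) := by
  have habar : abar n w = 1 := MonoidHom.mem_ker.mp hw
  have : (⟨w * (sec n (abar n w))⁻¹, uof_mem n w⟩ : ↥(NN n)) = ⟨w, hw⟩ := by
    apply Subtype.ext
    show w * (sec n (abar n w))⁻¹ = w
    rw [habar, sec_one, inv_one, mul_one]
  rw [muF, this]

lemma muF_one (n : ℕ) : muF n 1 = 0 := by
  rw [muF_of_mem n 1 (one_mem _)]
  have : (⟨1, one_mem _⟩ : ↥(NN n)) = 1 := rfl
  rw [this, map_one]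
  rfl

lemma mu_gen_zero (n : ℕ) (u : FreeGroup (Fin n)) (hu : u ∈ NN n) (g : FreeGroup (Fin n))
    (i : Fin n) :
    mu n ((MonoidAlgebra.of ℤ _ u - 1) * MonoidAlgebra.of ℤ _ g
      * (MonoidAlgebra.of ℤ _ (FreeGroup.of i) - 1)) = 0 := by
  have hexp : (MonoidAlgebra.of ℤ (FreeGroup (Fin n)) u - 1) * MonoidAlgebra.of ℤ _ g
      * (MonoidAlgebra.of ℤ _ (FreeGroup.of i) - 1)
      = MonoidAlgebra.of ℤ _ (u * (g * FreeGroup.of i)) - MonoidAlgebra.of ℤ _ (g * FreeGroup.of i)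
        - MonoidAlgebra.of ℤ _ (u * g) + MonoidAlgebra.of ℤ _ g := by
    rw [map_mul, map_mul, map_mul]
    noncomm_ring
  rw [hexp, map_add, map_sub, map_sub, mu_of, mu_of, mu_of, mu_of,
    muF_mul_left n u hu, muF_mul_left n u hu]
  abel

/-! ### Magnus' theorem: the kernel of `psi` is the second derived subgroup -/

theorem magnus (n : ℕ) (w : FreeGroup (Fin n)) (hw : w ∈ NN n)
    (hD : ∀ i, alphaMap n (D n w i) = 0) : w ∈ ⁅NN n, NN n⁆ := by
  have hWK : ∀ i, D n w i ∈ WK n := fun i => mem_WK_of_alphaMap_eq_zero n _ (hD i)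
  have hT : ∀ i : Fin n, ∀ x ∈ WK n,
      mu n (x * (MonoidAlgebra.of ℤ _ (FreeGroup.of i) - 1)) = 0 := by
    intro i x hx
    induction hx using Submodule.span_induction with
    | mem y hy =>
        obtain ⟨u, hu, g, rfl⟩ := hy
        exact mu_gen_zero n u hu g i
    | zero => rw [zero_mul, map_zero]
    | add a b _ _ ha hb => rw [add_mul, map_add, ha, hb, add_zero]
    | smul c a _ ha => rw [smul_mul_assoc, map_smul, ha, smul_zero]
  have hsum : mu n (MonoidAlgebra.of ℤ _ w - 1) = 0 := by
    rw [← fox n w, map_sum]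
    refine Finset.sum_eq_zero fun i _ => hT i _ (hWK i)
  have hone : mu n (1 : ZF n) = 0 := by
    have : (1 : ZF n) = MonoidAlgebra.of ℤ _ (1 : FreeGroup (Fin n)) := (map_one _).symm
    rw [this, mu_of, muF_one]
  rw [map_sub, hone, sub_zero, mu_of, muF_of_mem n w hw] at hsum
  have h1 : Abelianization.of (⟨w, hw⟩ : ↥(NN n)) = 1 := Additive.ofMul.injective hsum
  have h2 : (⟨w, hw⟩ : ↥(NN n)) ∈ commutator ↥(NN n) :=
    (QuotientGroup.eq_one_iff _).mp h1
  have h3 : w ∈ Subgroup.map (NN n).subtype (commutator ↥(NN n)) :=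
    ⟨⟨w, hw⟩, h2, rfl⟩
  rwa [commutator_def, Subgroup.map_commutator, ← MonoidHom.range_eq_map,
    Subgroup.range_subtype] at h3

/-! ### The kernel of `abar` is the commutator subgroup -/

def bHom (n : ℕ) : (Fin n →₀ ℤ) →+ Additive (Abelianization (FreeGroup (Fin n))) :=
  Finsupp.liftAddHom fun i =>
    zmultiplesHom _ (Additive.ofMul (Abelianization.of (FreeGroup.of i)))

def beta (n : ℕ) : AA n →* Abelianization (FreeGroup (Fin n)) where
  toFun a := Additive.toMul (bHom n (Multiplicative.toAdd a))
  map_one' := by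
    show Additive.toMul (bHom n 0) = 1
    rw [map_zero]
    rfl
  map_mul' a b := by
    show Additive.toMul (bHom n (Multiplicative.toAdd a + Multiplicative.toAdd b)) = _
    rw [map_add]
    rfl

lemma beta_abar (n : ℕ) :
    (beta n).comp (abar n) = Abelianization.of := by
  apply FreeGroup.ext_hom
  intro i
  show Additive.toMul (bHom n (Multiplicative.toAdd (abar n (FreeGroup.of i)))) = _
  rw [abar, FreeGroup.lift_apply_of]
  show Additive.toMul (bHom n (Finsupp.single i 1)) = _
  rw [bHom, Finsupp.liftAddHom_apply_single]
  show Additive.toMul ((1 : ℤ) • Additive.ofMul (Abelianization.of (FreeGroup.of i))) = _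
  rw [one_zsmul]
  rfl

lemma NN_eq_commutator (n : ℕ) : NN n = commutator (FreeGroup (Fin n)) := by
  apply le_antisymm
  · intro w hw
    have h1 : Abelianization.of w = 1 := by
      have := DFunLike.congr_fun (beta_abar n) w
      rw [MonoidHom.comp_apply, MonoidHom.mem_ker.mp hw, map_one] at this
      exact this.symm
    exact (QuotientGroup.eq_one_iff _).mp h1
  · exact Abelianization.commutator_subset_ker (abar n)

/-! ### The target of `psi` is metabelian -/

lemma MA_derived_two (n : ℕ) : derivedSeries (MA n) 2 = ⊥ := by
  have h1 : derivedSeries (MA n) 1 ≤ (SemidirectProduct.rightHom : MA n →* AA n).ker := by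
    rw [derivedSeries_one]
    exact Abelianization.commutator_subset_ker _
  have hcomm : ∀ x ∈ (SemidirectProduct.rightHom : MA n →* AA n).ker,
      ∀ y ∈ (SemidirectProduct.rightHom : MA n →* AA n).ker, x * y = y * x := by
    intro x hx y hy
    have hx1 : x.right = 1 := hx
    have hy1 : y.right = 1 := hy
    ext
    · rw [SemidirectProduct.mul_left, SemidirectProduct.mul_left, hx1, hy1, map_one,
        MulAut.one_apply, MulAut.one_apply, mul_comm]
    · rw [SemidirectProduct.mul_right, SemidirectProduct.mul_right, hx1, hy1]
  have h2 : derivedSeries (MA n) 2 = ⁅derivedSeries (MA n) 1, derivedSeries (MA n) 1⁆ :=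
    derivedSeries_succ _ 1
  rw [h2, eq_bot_iff]
  refine Subgroup.commutator_le.mpr ?_
  intro a ha b hb
  rw [Subgroup.mem_bot, commutatorElement_eq_one_iff_mul_comm]
  exact hcomm a (h1 ha) b (h1 hb)

lemma derived_two_le_ker_psi (n : ℕ) :
    derivedSeries (FreeGroup (Fin n)) 2 ≤ (psi n).ker := by
  intro w hw
  rw [MonoidHom.mem_ker]
  have h1 : psi n w ∈ Subgroup.map (psi n) (derivedSeries (FreeGroup (Fin n)) 2) :=
    ⟨w, hw, rfl⟩
  have h2 := map_derivedSeries_le_derivedSeries (psi n) 2 h1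
  rw [MA_derived_two n, Subgroup.mem_bot] at h2
  exact h2

lemma psi_left_toAdd (n : ℕ) (w : FreeGroup (Fin n)) (i : Fin n) :
    Multiplicative.toAdd ((psi n w).left) i = alphaMap n (D n w i) := rfl

lemma ker_psi_le_derived_two (n : ℕ) (w : FreeGroup (Fin n)) (hw : psi n w = 1) :
    w ∈ derivedSeries (FreeGroup (Fin n)) 2 := by
  have habar : abar n w = 1 := by
    have := DFunLike.congr_fun (rightHom_psi n) w
    rw [MonoidHom.comp_apply, hw, map_one] at this
    exact this.symm
  have hD : ∀ i, alphaMap n (D n w i) = 0 := by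
    intro i
    rw [← psi_left_toAdd, hw]
    rfl
  have hmem : w ∈ ⁅NN n, NN n⁆ := magnus n w habar hD
  have hds : derivedSeries (FreeGroup (Fin n)) 2
      = ⁅NN n, NN n⁆ := by
    rw [derivedSeries_succ, derivedSeries_one, NN_eq_commutator]
  rwa [hds]
end
end Stmt9

/-- The commutator ⁅a,b⁆ = a⁻¹b⁻¹ab (paper convention). -/
def pcomm {G : Type*} [Group G] (a b : G) : G := a⁻¹ * b⁻¹ * a * b

instance (n : ℕ) : (derivedSeries (FreeGroup (Fin n)) 2).Normal :=
  derivedSeries_normal _ _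

/-- The free metabelian group of rank n: the quotient of the free group on n
generators by its second derived subgroup. -/
def freeMetabelian (n : ℕ) :=
  FreeGroup (Fin n) ⧸ derivedSeries (FreeGroup (Fin n)) 2

instance (n : ℕ) : Group (freeMetabelian n) :=
  inferInstanceAs (Group (FreeGroup (Fin n) ⧸ derivedSeries (FreeGroup (Fin n)) 2))

/-- The images of the standard generators of the free group in the free
metabelian group. -/
def xgen (n : ℕ) (i : Fin n) : freeMetabelian n :=
  QuotientGroup.mk (FreeGroup.of i)

theorem stmt9 (n : ℕ) (hn : 2 ≤ n) (g : freeMetabelian n)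
    (hg : g ∈ commutator (freeMetabelian n)) (hg1 : g ≠ 1) :
    Subgroup.centralizer {g} = commutator (freeMetabelian n) := by
  classical
  let π : FreeGroup (Fin n) →* freeMetabelian n :=
    QuotientGroup.mk' (derivedSeries (FreeGroup (Fin n)) 2)
  have hπ : Function.Surjective π := QuotientGroup.mk'_surjective _
  have hkerπ : π.ker = derivedSeries (FreeGroup (Fin n)) 2 := QuotientGroup.ker_mk' _
  have hds2 : derivedSeries (freeMetabelian n) 2 = ⊥ := by
    have h := map_derivedSeries_eq hπ 2
    rw [← h, Subgroup.map_eq_bot_iff, ← hkerπ]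
  have hcommG : commutator (freeMetabelian n)
      = Subgroup.map π (commutator (FreeGroup (Fin n))) := by
    rw [commutator_def, commutator_def, Subgroup.map_commutator,
      Subgroup.map_top_of_surjective π hπ]
  apply le_antisymm
  · -- centralizer ≤ commutator
    intro x hx
    obtain ⟨ξ, hξ⟩ := hπ x
    rw [hcommG] at hg
    obtain ⟨ω, hω, hωg⟩ := hg
    have hωN : ω ∈ Stmt9.NN n := by rw [Stmt9.NN_eq_commutator]; exact hω
    have habarω : Stmt9.abar n ω = 1 := MonoidHom.mem_ker.mp hωN
    have hxg : g * x = x * g := hx g rfl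
    have hπcomm : π (ω * ξ * (ξ * ω)⁻¹) = 1 := by
      rw [map_mul, map_inv, map_mul, map_mul, hξ, hωg, hxg, mul_inv_cancel]
    have hmemker : ω * ξ * (ξ * ω)⁻¹ ∈ (Stmt9.psi n).ker :=
      Stmt9.derived_two_le_ker_psi n (by rw [← hkerπ]; exact hπcomm)
    have hpsicomm : Stmt9.psi n ω * Stmt9.psi n ξ = Stmt9.psi n ξ * Stmt9.psi n ω := by
      have h := MonoidHom.mem_ker.mp hmemker
      rw [map_mul, map_inv, map_mul, map_mul] at h
      exact mul_inv_eq_one.mp h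
    set p := Stmt9.psi n ξ with hp
    set q := Stmt9.psi n ω with hq
    have hqright : q.right = 1 := by
      have h := DFunLike.congr_fun (Stmt9.rightHom_psi n) ω
      rw [MonoidHom.comp_apply] at h
      show SemidirectProduct.rightHom q = 1
      rw [hq, h, habarω]
    have hpright : p.right = Stmt9.abar n ξ := by
      have h := DFunLike.congr_fun (Stmt9.rightHom_psi n) ξ
      rw [MonoidHom.comp_apply] at h
      show SemidirectProduct.rightHom p = _
      rw [hp, h]
    -- q.left is nonzero
    have hqleft_ne : q.left ≠ 1 := by
      intro hq1
      have hqone : q = 1 := by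
        ext
        · rw [hq1]; rfl
        · rw [hqright]; rfl
      have hωds2 : ω ∈ derivedSeries (FreeGroup (Fin n)) 2 :=
        Stmt9.ker_psi_le_derived_two n ω hqone
      have : π ω = 1 := by rw [← MonoidHom.mem_ker, hkerπ]; exact hωds2
      rw [hωg] at this
      exact hg1 this
    obtain ⟨i, hi⟩ : ∃ i : Fin n, Multiplicative.toAdd q.left i ≠ 0 := by
      by_contra hcon
      push_neg at hcon
      apply hqleft_ne
      have : Multiplicative.toAdd q.left = 0 := funext hcon
      exact Multiplicative.toAdd.injective this
    -- commutation implies the action fixes q.left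
    have hleft : (Stmt9.magnusAut n (Stmt9.AA n)) p.right q.left = q.left := by
      have h1 : (q * p).left = q.left * p.left := by
        rw [SemidirectProduct.mul_left, hqright, map_one, MulAut.one_apply]
      have h2 : (p * q).left = p.left * (Stmt9.magnusAut n (Stmt9.AA n)) p.right q.left := by
        rw [SemidirectProduct.mul_left]
      have h3 : q.left * p.left = p.left * (Stmt9.magnusAut n (Stmt9.AA n)) p.right q.left := by
        rw [← h1, ← h2, hpsicomm]
      rw [mul_comm q.left p.left] at h3
      exact (mul_left_cancel h3).symm
    -- extract scalar equation at coordinate i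
    have hscal : MonoidAlgebra.of ℤ (Stmt9.AA n) p.right * Multiplicative.toAdd q.left i
        = Multiplicative.toAdd q.left i := by
      have h2 := congrFun (congrArg Multiplicative.toAdd hleft) i
      have h0 : Multiplicative.toAdd ((Stmt9.magnusAut n (Stmt9.AA n)) p.right q.left) i
          = MonoidAlgebra.of ℤ (Stmt9.AA n) p.right * Multiplicative.toAdd q.left i := rfl
      exact h0.symm.trans h2
    have hunit : MonoidAlgebra.of ℤ (Stmt9.AA n) p.right = 1 := by
      have hz : (MonoidAlgebra.of ℤ (Stmt9.AA n) p.right - 1)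
          * Multiplicative.toAdd q.left i = 0 := by
        rw [sub_mul, one_mul, hscal, sub_self]
      rcases mul_eq_zero.mp hz with h | h
      · rwa [sub_eq_zero] at h
      · exact absurd h hi
    have habarξ : Stmt9.abar n ξ = 1 := by
      rw [← hpright]
      have : MonoidAlgebra.of ℤ (Stmt9.AA n) p.right = MonoidAlgebra.of ℤ (Stmt9.AA n) 1 := by
        rw [hunit, map_one]
      exact MonoidAlgebra.of_injective this
    have hξcomm : ξ ∈ commutator (FreeGroup (Fin n)) := by
      rw [← Stmt9.NN_eq_commutator]
      exact MonoidHom.mem_ker.mpr habarξ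
    rw [hcommG]
    exact ⟨ξ, hξcomm, hξ⟩
  · -- commutator ≤ centralizer
    intro h hh
    rw [Subgroup.mem_centralizer_iff]
    intro y hy
    have hyg : y = g := hy
    subst hyg
    open commutatorElement in
    have hmem : ⁅y, h⁆ ∈ derivedSeries (freeMetabelian n) 2 := by
      have h2 : derivedSeries (freeMetabelian n) 2
          = ⁅derivedSeries (freeMetabelian n) 1, derivedSeries (freeMetabelian n) 1⁆ :=
        derivedSeries_succ _ 1
      rw [h2]
      exact Subgroup.commutator_mem_commutator
        (by rw [derivedSeries_one]; exact hg) (by rw [derivedSeries_one]; exact hh)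
    rw [hds2, Subgroup.mem_bot, commutatorElement_eq_one_iff_mul_comm] at hmem
    exact hmem
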